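/- Let n ≥ 1. There exists a constant C > 0 such that for all n×n complex matrices X, Y with ‖X‖ ≤ 1 and ‖Y‖ ≤ 1, setting c₁ = X + Y, c₂ = (1/2)(X*Y − Y*X), c₃ = (1/12)(X²*Y + Y*X² − 2*X*Y*X + Y²*X + X*Y² − 2*Y*X*Y), and c₄ = (1/24)(X²*Y² − 2*X*Y*X*Y − Y²*X² + 2*Y*X*Y*X), one has ‖exp(X) * exp(Y) − exp(c₁ + c₂ + c₃ + c₄)‖ ≤ C · (‖X‖ + ‖Y‖)⁵. (These are the first four terms of the Baker–Campbell–Hausdorff expansion e^X e^Y = e^Z.) -/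

import Mathlib

open scoped Matrix.Norms.L2Operator

open NormedSpace in
private lemma bch_tail_bound {𝔸 : Type*} [NormedRing 𝔸] [NormedAlgebra ℂ 𝔸] [CompleteSpace 𝔸]
    (A : 𝔸) :
    ‖exp A - ∑ k ∈ Finset.range 5, ((k.factorial : ℂ)⁻¹) • A ^ k‖ ≤ ‖A‖ ^ 5 * Real.exp ‖A‖ := by
  have hs : Summable fun k : ℕ => ((k.factorial : ℂ)⁻¹) • A ^ k := expSeries_summable' A
  have hsplit : exp A - ∑ k ∈ Finset.range 5, ((k.factorial : ℂ)⁻¹) • A ^ k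
      = ∑' k : ℕ, (((k + 5).factorial : ℂ)⁻¹) • A ^ (k + 5) := by
    rw [exp_eq_tsum ℂ]
    dsimp only
    rw [← hs.sum_add_tsum_nat_add 5]
    abel
  rw [hsplit]
  have hb : ∀ k : ℕ, ‖(((k + 5).factorial : ℂ)⁻¹) • A ^ (k + 5)‖
      ≤ ‖A‖ ^ 5 * (‖A‖ ^ k / k.factorial) := by
    intro k
    rw [norm_smul]
    have h1 : ‖((k + 5).factorial : ℂ)⁻¹‖ ≤ ((k.factorial : ℝ))⁻¹ := by
      rw [norm_inv, Complex.norm_natCast]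
      have : (k.factorial : ℝ) ≤ ((k + 5).factorial : ℝ) := by
        exact_mod_cast Nat.factorial_le (by omega)
      exact inv_anti₀ (by positivity) this
    have h2 : ‖A ^ (k + 5)‖ ≤ ‖A‖ ^ (k + 5) := norm_pow_le' A (by omega)
    calc ‖((k + 5).factorial : ℂ)⁻¹‖ * ‖A ^ (k + 5)‖
        ≤ (k.factorial : ℝ)⁻¹ * ‖A‖ ^ (k + 5) :=
          mul_le_mul h1 h2 (norm_nonneg _) (by positivity)
      _ = ‖A‖ ^ 5 * (‖A‖ ^ k / k.factorial) := by rw [pow_add]; ring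
  have hsumm : Summable fun k : ℕ => ‖A‖ ^ 5 * (‖A‖ ^ k / k.factorial) :=
    (Real.summable_pow_div_factorial ‖A‖).mul_left _
  calc ‖∑' k : ℕ, (((k + 5).factorial : ℂ)⁻¹) • A ^ (k + 5)‖
      ≤ ∑' k : ℕ, ‖(((k + 5).factorial : ℂ)⁻¹) • A ^ (k + 5)‖ :=
        norm_tsum_le_tsum_norm (Summable.of_nonneg_of_le (fun k => norm_nonneg _) hb hsumm)
    _ ≤ ∑' k : ℕ, ‖A‖ ^ 5 * (‖A‖ ^ k / k.factorial) :=
        Summable.tsum_le_tsum hb (Summable.of_nonneg_of_le (fun k => norm_nonneg _) hb hsumm) hsumm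
    _ = ‖A‖ ^ 5 * Real.exp ‖A‖ := by
        rw [tsum_mul_left, Real.exp_eq_exp_ℝ, exp_eq_tsum_div]

open NormedSpace in
private lemma bch_norm_exp_le {𝔸 : Type*} [NormedRing 𝔸] [NormedAlgebra ℂ 𝔸] [CompleteSpace 𝔸]
    [NormOneClass 𝔸] (A : 𝔸) : ‖exp A‖ ≤ Real.exp ‖A‖ := by
  rw [exp_eq_tsum ℂ]
  dsimp only
  calc ‖∑' k : ℕ, ((k.factorial : ℂ)⁻¹) • A ^ k‖
      ≤ ∑' k : ℕ, ‖A‖ ^ k / k.factorial := by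
        apply (norm_tsum_le_tsum_norm (norm_expSeries_summable' A)).trans
        apply Summable.tsum_le_tsum ?_ (norm_expSeries_summable' A) (Real.summable_pow_div_factorial _)
        intro k
        rw [norm_smul, norm_inv, Complex.norm_natCast, div_eq_inv_mul]
        exact mul_le_mul_of_nonneg_left (norm_pow_le A k) (by positivity)
    _ = Real.exp ‖A‖ := by rw [Real.exp_eq_exp_ℝ, exp_eq_tsum_div]

private lemma bch_nmul {𝔸 : Type*} [NormedRing 𝔸] {A B : 𝔸} {a b : ℝ}
    (ha : ‖A‖ ≤ a) (hb : ‖B‖ ≤ b) (h0 : 0 ≤ a) : ‖A * B‖ ≤ a * b :=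
  le_trans (norm_mul_le _ _) (mul_le_mul ha hb (norm_nonneg _) h0)

private lemma bch_nsmul {𝔸 : Type*} [NormedRing 𝔸] [NormedAlgebra ℂ 𝔸] {A : 𝔸} {c : ℂ}
    {q r : ℝ} (hc : ‖c‖ = q) (hA : ‖A‖ ≤ r) : ‖c • A‖ ≤ q * r := by
  rw [norm_smul, hc]
  exact mul_le_mul_of_nonneg_left hA (hc ▸ norm_nonneg c)

private lemma bch_sum5 {𝔸 : Type*} [NormedRing 𝔸] [NormedAlgebra ℂ 𝔸] (A : 𝔸) :
    ∑ k ∈ Finset.range 5, ((k.factorial : ℂ)⁻¹) • A ^ k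
      = 1 + A + (2:ℂ)⁻¹ • (A*A) + (6:ℂ)⁻¹ • (A*A*A) + (24:ℂ)⁻¹ • (A*A*A*A) := by
  simp [Finset.sum_range_succ, pow_succ, Nat.factorial]

private lemma bch_core_identity {𝔸 : Type*} [Ring 𝔸] [Algebra ℂ 𝔸] (X Y c1 c2 c3 c4 : 𝔸)
    (h1 : c1 = X + Y)
    (h2 : c2 = ((1:ℂ)/2) • (X*Y - Y*X))
    (h3 : c3 = ((1:ℂ)/12) • (X*X*Y + Y*(X*X) - 2•(X*Y*X) + Y*Y*X + X*(Y*Y) - 2•(Y*X*Y)))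
    (h4 : c4 = ((1:ℂ)/24) • (X*X*(Y*Y) - 2•(X*Y*X*Y) - Y*Y*(X*X) + 2•(Y*X*Y*X))) :
    (1 + X + (2:ℂ)⁻¹•(X*X) + (6:ℂ)⁻¹•(X*X*X) + (24:ℂ)⁻¹•(X*X*X*X)) *
      (1 + Y + (2:ℂ)⁻¹•(Y*Y) + (6:ℂ)⁻¹•(Y*Y*Y) + (24:ℂ)⁻¹•(Y*Y*Y*Y))
    = (1 + (c1 + c2 + c3 + c4)
        + (2:ℂ)⁻¹•(c1*c1 + c1*c2 + c2*c1 + c1*c3 + c3*c1 + c2*c2)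
        + (6:ℂ)⁻¹•(c1*c1*c1 + c2*(c1*c1) + c1*(c2*c1) + c1*(c1*c2))
        + (24:ℂ)⁻¹•(c1*c1*c1*c1))
      + ((24:ℂ)⁻¹•(X*(Y*Y*Y*Y)) + (12:ℂ)⁻¹•(X*X*(Y*Y*Y)) + (48:ℂ)⁻¹•(X*X*(Y*Y*Y*Y))
        + (12:ℂ)⁻¹•(X*X*X*(Y*Y)) + (36:ℂ)⁻¹•(X*X*X*(Y*Y*Y)) + (144:ℂ)⁻¹•(X*X*X*(Y*Y*Y*Y))
        + (24:ℂ)⁻¹•(X*X*X*X*Y) + (48:ℂ)⁻¹•(X*X*X*X*(Y*Y)) + (144:ℂ)⁻¹•(X*X*X*X*(Y*Y*Y))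
        + (576:ℂ)⁻¹•(X*X*X*X*(Y*Y*Y*Y))) := by
  subst h1 h2 h3 h4
  simp only [mul_add, add_mul, mul_sub, sub_mul, smul_add, smul_sub, smul_smul,
    mul_smul_comm, smul_mul_assoc, mul_assoc, mul_one, one_mul]
  module

private lemma bch_nadd {𝔸 : Type*} [NormedRing 𝔸] {A B : 𝔸} {x y : ℝ}
    (ha : ‖A‖ ≤ x) (hb : ‖B‖ ≤ y) : ‖A + B‖ ≤ x + y :=
  (norm_add_le _ _).trans (add_le_add ha hb)

private lemma bch_nsub {𝔸 : Type*} [NormedRing 𝔸] {A B : 𝔸} {x y : ℝ}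
    (ha : ‖A‖ ≤ x) (hb : ‖B‖ ≤ y) : ‖A - B‖ ≤ x + y :=
  (norm_sub_le _ _).trans (add_le_add ha hb)
set_option maxHeartbeats 2000000 in
/-- Fourth-order Baker–Campbell–Hausdorff estimate: there is `C > 0` such that for all
`n × n` complex matrices `X`, `Y` of norm at most `1`, with `c₁, c₂, c₃, c₄` the first four
BCH terms, `‖exp X * exp Y − exp(c₁ + c₂ + c₃ + c₄)‖ ≤ C (‖X‖ + ‖Y‖)⁵`. -/
theorem bch_fourth_order (n : ℕ) (hn : 1 ≤ n) :
    ∃ C : ℝ, 0 < C ∧ ∀ X Y : Matrix (Fin n) (Fin n) ℂ, ‖X‖ ≤ 1 → ‖Y‖ ≤ 1 →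
      ‖NormedSpace.exp X * NormedSpace.exp Y -
          NormedSpace.exp
            ((X + Y) + ((1 : ℂ) / 2) • (X * Y - Y * X) +
              ((1 : ℂ) / 12) • (X * X * Y + Y * (X * X) - 2 • (X * Y * X)
                + Y * Y * X + X * (Y * Y) - 2 • (Y * X * Y)) +
              ((1 : ℂ) / 24) • (X * X * (Y * Y) - 2 • (X * Y * X * Y)
                - Y * Y * (X * X) + 2 • (Y * X * Y * X)))‖ ≤
        C * (‖X‖ + ‖Y‖) ^ 5 := by
  haveI : Nonempty (Fin n) := Fin.pos_iff_nonempty.mp hn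
  refine ⟨10 ^ 21, by norm_num, ?_⟩
  intro X Y hX1 hY1
  set c1 := X + Y with hd1
  set c2 := ((1 : ℂ) / 2) • (X * Y - Y * X) with hd2
  set c3 := ((1 : ℂ) / 12) • (X * X * Y + Y * (X * X) - 2 • (X * Y * X)
                + Y * Y * X + X * (Y * Y) - 2 • (Y * X * Y)) with hd3
  set c4 := ((1 : ℂ) / 24) • (X * X * (Y * Y) - 2 • (X * Y * X * Y)
                - Y * Y * (X * X) + 2 • (Y * X * Y * X)) with hd4
  set Z := c1 + c2 + c3 + c4 with hdZ
  set s := ‖X‖ + ‖Y‖ with hds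
  clear_value c1 c2 c3 c4 Z s
  have hs0 : (0:ℝ) ≤ s := by rw [hds]; positivity
  have hs2 : s ≤ 2 := by rw [hds]; linarith
  have hXs : ‖X‖ ≤ s := by rw [hds]; linarith [norm_nonneg Y]
  have hYs : ‖Y‖ ≤ s := by rw [hds]; linarith [norm_nonneg X]
  have s20 : (0:ℝ) ≤ s ^ 2 := pow_nonneg hs0 2
  have s30 : (0:ℝ) ≤ s ^ 3 := pow_nonneg hs0 3
  have s40 : (0:ℝ) ≤ s ^ 4 := pow_nonneg hs0 4
  have s50 : (0:ℝ) ≤ s ^ 5 := pow_nonneg hs0 5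
  have sm0 : (0:ℝ) ≤ s * s := mul_nonneg hs0 hs0
  have sm20 : (0:ℝ) ≤ s * s * s := mul_nonneg sm0 hs0
  have sm30 : (0:ℝ) ≤ s * s * s * s := mul_nonneg sm20 hs0
  have q1 : s ^ 2 ≤ 2 * s := by nlinarith [mul_nonneg hs0 (sub_nonneg.mpr hs2)]
  have q2 : s ^ 3 ≤ 2 * s ^ 2 := by nlinarith [mul_nonneg s20 (sub_nonneg.mpr hs2)]
  have q3 : s ^ 4 ≤ 2 * s ^ 3 := by nlinarith [mul_nonneg s30 (sub_nonneg.mpr hs2)]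
  have p6 : s ^ 6 ≤ 2 * s ^ 5 := by nlinarith [mul_nonneg s50 (sub_nonneg.mpr hs2)]
  have p7 : s ^ 7 ≤ 4 * s ^ 5 := by
    nlinarith [mul_nonneg (mul_nonneg s50 hs0) (sub_nonneg.mpr hs2),
      mul_nonneg s50 (sub_nonneg.mpr hs2)]
  have p8 : s ^ 8 ≤ 8 * s ^ 5 := by
    nlinarith [mul_nonneg (mul_nonneg (mul_nonneg s50 hs0) hs0) (sub_nonneg.mpr hs2),
      mul_nonneg (mul_nonneg s50 hs0) (sub_nonneg.mpr hs2), mul_nonneg s50 (sub_nonneg.mpr hs2)]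
  -- norms of the BCH coefficients
  have hc1n : ‖c1‖ ≤ s := by rw [hd1, hds]; exact norm_add_le X Y
  have hc2n : ‖c2‖ ≤ s ^ 2 := by
    rw [hd2]
    have e : ‖X * Y - Y * X‖ ≤ s * s + s * s :=
      bch_nsub (bch_nmul hXs hYs hs0) (bch_nmul hYs hXs hs0)
    have := bch_nsmul (show ‖(1:ℂ)/2‖ = (1/2 : ℝ) by simp) e
    nlinarith [this]
  have hc3n : ‖c3‖ ≤ s ^ 3 := by
    rw [hd3]
    have b1 : ‖X * X * Y‖ ≤ s * s * s := bch_nmul (bch_nmul hXs hXs hs0) hYs sm0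
    have b2 : ‖Y * (X * X)‖ ≤ s * (s * s) := bch_nmul hYs (bch_nmul hXs hXs hs0) hs0
    have b3 : ‖2 • (X * Y * X)‖ ≤ 2 * (s * s * s) := by
      rw [two_smul]
      have h := bch_nmul (bch_nmul hXs hYs hs0) hXs sm0
      linarith [bch_nadd h h]
    have b4 : ‖Y * Y * X‖ ≤ s * s * s := bch_nmul (bch_nmul hYs hYs hs0) hXs sm0
    have b5 : ‖X * (Y * Y)‖ ≤ s * (s * s) := bch_nmul hXs (bch_nmul hYs hYs hs0) hs0
    have b6 : ‖2 • (Y * X * Y)‖ ≤ 2 * (s * s * s) := by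
      rw [two_smul]
      have h := bch_nmul (bch_nmul hYs hXs hs0) hYs sm0
      linarith [bch_nadd h h]
    have e := bch_nsub (bch_nadd (bch_nadd (bch_nsub (bch_nadd b1 b2) b3) b4) b5) b6
    have := bch_nsmul (show ‖(1:ℂ)/12‖ = (1/12 : ℝ) by simp) e
    nlinarith [this]
  have hc4n : ‖c4‖ ≤ s ^ 4 := by
    rw [hd4]
    have b1 : ‖X * X * (Y * Y)‖ ≤ s * s * (s * s) :=
      bch_nmul (bch_nmul hXs hXs hs0) (bch_nmul hYs hYs hs0) sm0
    have b2 : ‖2 • (X * Y * X * Y)‖ ≤ 2 * (s * s * s * s) := by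
      rw [two_smul]
      have h := bch_nmul (bch_nmul (bch_nmul hXs hYs hs0) hXs sm0) hYs sm20
      linarith [bch_nadd h h]
    have b3 : ‖Y * Y * (X * X)‖ ≤ s * s * (s * s) :=
      bch_nmul (bch_nmul hYs hYs hs0) (bch_nmul hXs hXs hs0) sm0
    have b4 : ‖2 • (Y * X * Y * X)‖ ≤ 2 * (s * s * s * s) := by
      rw [two_smul]
      have h := bch_nmul (bch_nmul (bch_nmul hYs hXs hs0) hYs sm0) hXs sm20
      linarith [bch_nadd h h]
    have e := bch_nadd (bch_nsub (bch_nsub b1 b2) b3) b4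
    have := bch_nsmul (show ‖(1:ℂ)/24‖ = (1/24 : ℝ) by simp) e
    nlinarith [this]
  have hZn : ‖Z‖ ≤ 15 * s := by
    rw [hdZ]
    have := bch_nadd (bch_nadd (bch_nadd hc1n hc2n) hc3n) hc4n
    linarith
  have hZ30 : ‖Z‖ ≤ 30 := by linarith
  have hVn : ‖c3 + c4‖ ≤ 3 * s ^ 3 := by have := bch_nadd hc3n hc4n; linarith
  have hWn : ‖c1 + c2‖ ≤ 3 * s := by have := bch_nadd hc1n hc2n; linarith
  have hUn : ‖c2 + c3 + c4‖ ≤ 7 * s ^ 2 := by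
    have := bch_nadd (bch_nadd hc2n hc3n) hc4n; linarith
  have z0 : (0:ℝ) ≤ 15 * s := by linarith
  have v0 : (0:ℝ) ≤ 3 * s ^ 3 := by linarith
  have w0 : (0:ℝ) ≤ 3 * s := by linarith
  have u0 : (0:ℝ) ≤ 7 * s ^ 2 := by linarith
  -- power-sum identities
  have h2 : Z * Z = (c1*c1 + c1*c2 + c2*c1 + c1*c3 + c3*c1 + c2*c2)
      + (c1*c4 + c4*c1 + c2*c3 + c3*c2 + c2*c4 + c4*c2 + c3*c3 + c3*c4 + c4*c3 + c4*c4) := by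
    rw [hdZ]; noncomm_ring
  have h3 : Z * Z * Z = (c1*c1*c1 + c2*(c1*c1) + c1*(c2*c1) + c1*(c1*c2))
      + (c2*(c2*c1) + c2*(c1*c2) + c1*(c2*c2) + c2*(c2*c2))
      + (Z*(Z*(c3+c4)) + Z*((c3+c4)*(c1+c2)) + (c3+c4)*((c1+c2)*(c1+c2))) := by
    rw [hdZ]; noncomm_ring
  have h4 : Z * Z * Z * Z = c1*c1*c1*c1
      + (Z*(Z*(Z*(c2+c3+c4))) + Z*(Z*((c2+c3+c4)*c1)) + Z*((c2+c3+c4)*(c1*c1))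
        + (c2+c3+c4)*(c1*(c1*c1))) := by
    rw [hdZ]; noncomm_ring
  set SX := ∑ k ∈ Finset.range 5, ((k.factorial : ℂ)⁻¹) • X ^ k with hdSX
  set SY := ∑ k ∈ Finset.range 5, ((k.factorial : ℂ)⁻¹) • Y ^ k with hdSY
  set SZ := ∑ k ∈ Finset.range 5, ((k.factorial : ℂ)⁻¹) • Z ^ k with hdSZ
  clear_value SX SY SZ
  have key : SX * SY - SZ
      = ((24:ℂ)⁻¹•(X*(Y*Y*Y*Y)) + (12:ℂ)⁻¹•(X*X*(Y*Y*Y)) + (48:ℂ)⁻¹•(X*X*(Y*Y*Y*Y))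
        + (12:ℂ)⁻¹•(X*X*X*(Y*Y)) + (36:ℂ)⁻¹•(X*X*X*(Y*Y*Y)) + (144:ℂ)⁻¹•(X*X*X*(Y*Y*Y*Y))
        + (24:ℂ)⁻¹•(X*X*X*X*Y) + (48:ℂ)⁻¹•(X*X*X*X*(Y*Y)) + (144:ℂ)⁻¹•(X*X*X*X*(Y*Y*Y))
        + (576:ℂ)⁻¹•(X*X*X*X*(Y*Y*Y*Y)))
      - (2:ℂ)⁻¹•(c1*c4 + c4*c1 + c2*c3 + c3*c2 + c2*c4 + c4*c2 + c3*c3 + c3*c4 + c4*c3 + c4*c4)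
      - (6:ℂ)⁻¹•((Z*(Z*(c3+c4)) + Z*((c3+c4)*(c1+c2)) + (c3+c4)*((c1+c2)*(c1+c2)))
          + (c2*(c2*c1) + c2*(c1*c2) + c1*(c2*c2) + c2*(c2*c2)))
      - (24:ℂ)⁻¹•(Z*(Z*(Z*(c2+c3+c4))) + Z*(Z*((c2+c3+c4)*c1)) + Z*((c2+c3+c4)*(c1*c1))
          + (c2+c3+c4)*(c1*(c1*c1))) := by
    rw [hdSX, hdSY, hdSZ, bch_sum5 X, bch_sum5 Y, bch_sum5 Z, h4, h3, h2,
      bch_core_identity X Y c1 c2 c3 c4 hd1 hd2 hd3 hd4, hdZ]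
    simp only [smul_add]
    abel
  -- norm bound on the algebraic part
  have hE2n : ‖c1*c4 + c4*c1 + c2*c3 + c3*c2 + c2*c4 + c4*c2 + c3*c3 + c3*c4 + c4*c3 + c4*c4‖
      ≤ 26 * s ^ 5 := by
    have e := bch_nadd (bch_nadd (bch_nadd (bch_nadd (bch_nadd (bch_nadd (bch_nadd (bch_nadd
      (bch_nadd (bch_nmul hc1n hc4n hs0) (bch_nmul hc4n hc1n s40))
      (bch_nmul hc2n hc3n s20)) (bch_nmul hc3n hc2n s30)) (bch_nmul hc2n hc4n s20))
      (bch_nmul hc4n hc2n s40)) (bch_nmul hc3n hc3n s30)) (bch_nmul hc3n hc4n s30))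
      (bch_nmul hc4n hc3n s40)) (bch_nmul hc4n hc4n s40)
    nlinarith [e]
  have hE3n : ‖(Z*(Z*(c3+c4)) + Z*((c3+c4)*(c1+c2)) + (c3+c4)*((c1+c2)*(c1+c2)))
      + (c2*(c2*c1) + c2*(c1*c2) + c1*(c2*c2) + c2*(c2*c2))‖ ≤ 842 * s ^ 5 := by
    have u1 := bch_nmul hZn (bch_nmul hZn hVn z0) z0
    have u2 := bch_nmul hZn (bch_nmul hVn hWn v0) z0
    have u3 := bch_nmul hVn (bch_nmul hWn hWn w0) v0
    have b1 := bch_nmul hc2n (bch_nmul hc2n hc1n s20) s20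
    have b2 := bch_nmul hc2n (bch_nmul hc1n hc2n hs0) s20
    have b3 := bch_nmul hc1n (bch_nmul hc2n hc2n s20) hs0
    have b4 := bch_nmul hc2n (bch_nmul hc2n hc2n s20) s20
    have e := bch_nadd (bch_nadd (bch_nadd u1 u2) u3)
      (bch_nadd (bch_nadd (bch_nadd b1 b2) b3) b4)
    nlinarith [e, p6]
  have hE4n : ‖Z*(Z*(Z*(c2+c3+c4))) + Z*(Z*((c2+c3+c4)*c1)) + Z*((c2+c3+c4)*(c1*c1))
      + (c2+c3+c4)*(c1*(c1*c1))‖ ≤ 25312 * s ^ 5 := by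
    have u1 := bch_nmul hZn (bch_nmul hZn (bch_nmul hZn hUn z0) z0) z0
    have u2 := bch_nmul hZn (bch_nmul hZn (bch_nmul hUn hc1n u0) z0) z0
    have u3 := bch_nmul hZn (bch_nmul hUn (bch_nmul hc1n hc1n hs0) u0) z0
    have u4 := bch_nmul hUn (bch_nmul hc1n (bch_nmul hc1n hc1n hs0) hs0) u0
    have e := bch_nadd (bch_nadd (bch_nadd u1 u2) u3) u4
    nlinarith [e]
  have hHn : ‖(24:ℂ)⁻¹•(X*(Y*Y*Y*Y)) + (12:ℂ)⁻¹•(X*X*(Y*Y*Y)) + (48:ℂ)⁻¹•(X*X*(Y*Y*Y*Y))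
        + (12:ℂ)⁻¹•(X*X*X*(Y*Y)) + (36:ℂ)⁻¹•(X*X*X*(Y*Y*Y)) + (144:ℂ)⁻¹•(X*X*X*(Y*Y*Y*Y))
        + (24:ℂ)⁻¹•(X*X*X*X*Y) + (48:ℂ)⁻¹•(X*X*X*X*(Y*Y)) + (144:ℂ)⁻¹•(X*X*X*X*(Y*Y*Y))
        + (576:ℂ)⁻¹•(X*X*X*X*(Y*Y*Y*Y))‖ ≤ s ^ 5 := by
    have o1 : (0:ℝ) ≤ s * s * 1 := by nlinarith [sm0]
    have o2 : (0:ℝ) ≤ s * 1 := by linarith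
    have o3 : (0:ℝ) ≤ s * 1 * 1 := by nlinarith [hs0]
    have w14 : ‖X*(Y*Y*Y*Y)‖ ≤ s ^ 5 := by
      calc ‖X*(Y*Y*Y*Y)‖ ≤ s * (s * s * s * s) :=
            bch_nmul hXs (bch_nmul (bch_nmul (bch_nmul hYs hYs hs0) hYs sm0) hYs sm20) hs0
        _ = s ^ 5 := by ring
    have w23 : ‖X*X*(Y*Y*Y)‖ ≤ s ^ 5 := by
      calc ‖X*X*(Y*Y*Y)‖ ≤ s * s * (s * s * s) :=
            bch_nmul (bch_nmul hXs hXs hs0) (bch_nmul (bch_nmul hYs hYs hs0) hYs sm0) sm0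
        _ = s ^ 5 := by ring
    have w24 : ‖X*X*(Y*Y*Y*Y)‖ ≤ s ^ 5 := by
      calc ‖X*X*(Y*Y*Y*Y)‖ ≤ s * s * (s * s * s * 1) :=
            bch_nmul (bch_nmul hXs hXs hs0)
              (bch_nmul (bch_nmul (bch_nmul hYs hYs hs0) hYs sm0) hY1 sm20) sm0
        _ = s ^ 5 := by ring
    have w32 : ‖X*X*X*(Y*Y)‖ ≤ s ^ 5 := by
      calc ‖X*X*X*(Y*Y)‖ ≤ s * s * s * (s * s) :=
            bch_nmul (bch_nmul (bch_nmul hXs hXs hs0) hXs sm0) (bch_nmul hYs hYs hs0) sm20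
        _ = s ^ 5 := by ring
    have w33 : ‖X*X*X*(Y*Y*Y)‖ ≤ s ^ 5 := by
      calc ‖X*X*X*(Y*Y*Y)‖ ≤ s * s * s * (s * s * 1) :=
            bch_nmul (bch_nmul (bch_nmul hXs hXs hs0) hXs sm0)
              (bch_nmul (bch_nmul hYs hYs hs0) hY1 sm0) sm20
        _ = s ^ 5 := by ring
    have w34 : ‖X*X*X*(Y*Y*Y*Y)‖ ≤ s ^ 5 := by
      calc ‖X*X*X*(Y*Y*Y*Y)‖ ≤ s * s * s * (s * s * 1 * 1) :=
            bch_nmul (bch_nmul (bch_nmul hXs hXs hs0) hXs sm0)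
              (bch_nmul (bch_nmul (bch_nmul hYs hYs hs0) hY1 sm0) hY1 o1) sm20
        _ = s ^ 5 := by ring
    have w41 : ‖X*X*X*X*Y‖ ≤ s ^ 5 := by
      calc ‖X*X*X*X*Y‖ ≤ s * s * s * s * s :=
            bch_nmul (bch_nmul (bch_nmul (bch_nmul hXs hXs hs0) hXs sm0) hXs sm20) hYs sm30
        _ = s ^ 5 := by ring
    have w42 : ‖X*X*X*X*(Y*Y)‖ ≤ s ^ 5 := by
      calc ‖X*X*X*X*(Y*Y)‖ ≤ s * s * s * s * (s * 1) :=
            bch_nmul (bch_nmul (bch_nmul (bch_nmul hXs hXs hs0) hXs sm0) hXs sm20)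
              (bch_nmul hYs hY1 hs0) sm30
        _ = s ^ 5 := by ring
    have w43 : ‖X*X*X*X*(Y*Y*Y)‖ ≤ s ^ 5 := by
      calc ‖X*X*X*X*(Y*Y*Y)‖ ≤ s * s * s * s * (s * 1 * 1) :=
            bch_nmul (bch_nmul (bch_nmul (bch_nmul hXs hXs hs0) hXs sm0) hXs sm20)
              (bch_nmul (bch_nmul hYs hY1 hs0) hY1 o2) sm30
        _ = s ^ 5 := by ring
    have w44 : ‖X*X*X*X*(Y*Y*Y*Y)‖ ≤ s ^ 5 := by
      calc ‖X*X*X*X*(Y*Y*Y*Y)‖ ≤ s * s * s * s * (s * 1 * 1 * 1) :=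
            bch_nmul (bch_nmul (bch_nmul (bch_nmul hXs hXs hs0) hXs sm0) hXs sm20)
              (bch_nmul (bch_nmul (bch_nmul hYs hY1 hs0) hY1 o2) hY1 o3) sm30
        _ = s ^ 5 := by ring
    have e := bch_nadd (bch_nadd (bch_nadd (bch_nadd (bch_nadd (bch_nadd (bch_nadd (bch_nadd
      (bch_nadd
        (bch_nsmul (show ‖(24:ℂ)⁻¹‖ = ((24:ℝ))⁻¹ by simp) w14)
        (bch_nsmul (show ‖(12:ℂ)⁻¹‖ = ((12:ℝ))⁻¹ by simp) w23))
        (bch_nsmul (show ‖(48:ℂ)⁻¹‖ = ((48:ℝ))⁻¹ by simp) w24))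
        (bch_nsmul (show ‖(12:ℂ)⁻¹‖ = ((12:ℝ))⁻¹ by simp) w32))
        (bch_nsmul (show ‖(36:ℂ)⁻¹‖ = ((36:ℝ))⁻¹ by simp) w33))
        (bch_nsmul (show ‖(144:ℂ)⁻¹‖ = ((144:ℝ))⁻¹ by simp) w34))
        (bch_nsmul (show ‖(24:ℂ)⁻¹‖ = ((24:ℝ))⁻¹ by simp) w41))
        (bch_nsmul (show ‖(48:ℂ)⁻¹‖ = ((48:ℝ))⁻¹ by simp) w42))
        (bch_nsmul (show ‖(144:ℂ)⁻¹‖ = ((144:ℝ))⁻¹ by simp) w43))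
        (bch_nsmul (show ‖(576:ℂ)⁻¹‖ = ((576:ℝ))⁻¹ by simp) w44)
    linarith [e]
  have tC : ‖SX * SY - SZ‖ ≤ 1300 * s ^ 5 := by
    rw [key]
    have a2 := bch_nsmul (show ‖(2:ℂ)⁻¹‖ = ((2:ℝ))⁻¹ by simp) hE2n
    have a3 := bch_nsmul (show ‖(6:ℂ)⁻¹‖ = ((6:ℝ))⁻¹ by simp) hE3n
    have a4 := bch_nsmul (show ‖(24:ℂ)⁻¹‖ = ((24:ℝ))⁻¹ by simp) hE4n
    have e := bch_nsub (bch_nsub (bch_nsub hHn a2) a3) a4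
    linarith [e]
  -- analytic bounds
  have e1le3 : Real.exp 1 ≤ 3 := by linarith [Real.exp_one_lt_d9]
  have hRx : ‖NormedSpace.exp X - SX‖ ≤ 3 * s ^ 5 := by
    rw [hdSX]
    have h1 : ‖X‖ ^ 5 ≤ s ^ 5 := pow_le_pow_left₀ (norm_nonneg X) hXs 5
    have h2' : Real.exp ‖X‖ ≤ 3 := (Real.exp_le_exp.mpr hX1).trans e1le3
    calc ‖NormedSpace.exp X - ∑ k ∈ Finset.range 5, ((k.factorial : ℂ)⁻¹) • X ^ k‖
        ≤ ‖X‖ ^ 5 * Real.exp ‖X‖ := bch_tail_bound X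
      _ ≤ s ^ 5 * 3 := mul_le_mul h1 h2' (Real.exp_pos _).le s50
      _ = 3 * s ^ 5 := by ring
  have hRy : ‖NormedSpace.exp Y - SY‖ ≤ 3 * s ^ 5 := by
    rw [hdSY]
    have h1 : ‖Y‖ ^ 5 ≤ s ^ 5 := pow_le_pow_left₀ (norm_nonneg Y) hYs 5
    have h2' : Real.exp ‖Y‖ ≤ 3 := (Real.exp_le_exp.mpr hY1).trans e1le3
    calc ‖NormedSpace.exp Y - ∑ k ∈ Finset.range 5, ((k.factorial : ℂ)⁻¹) • Y ^ k‖
        ≤ ‖Y‖ ^ 5 * Real.exp ‖Y‖ := bch_tail_bound Y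
      _ ≤ s ^ 5 * 3 := mul_le_mul h1 h2' (Real.exp_pos _).le s50
      _ = 3 * s ^ 5 := by ring
  have hRz : ‖NormedSpace.exp Z - SZ‖ ≤ (15 * s) ^ 5 * 3 ^ 30 := by
    rw [hdSZ]
    have h1 : ‖Z‖ ^ 5 ≤ (15 * s) ^ 5 := pow_le_pow_left₀ (norm_nonneg Z) hZn 5
    have h2' : Real.exp ‖Z‖ ≤ 3 ^ 30 := by
      have e30 : Real.exp 30 = Real.exp 1 ^ 30 := by
        rw [← Real.exp_nat_mul]; norm_num
      calc Real.exp ‖Z‖ ≤ Real.exp 30 := Real.exp_le_exp.mpr hZ30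
        _ = Real.exp 1 ^ 30 := e30
        _ ≤ 3 ^ 30 := pow_le_pow_left₀ (Real.exp_pos 1).le e1le3 30
    calc ‖NormedSpace.exp Z - ∑ k ∈ Finset.range 5, ((k.factorial : ℂ)⁻¹) • Z ^ k‖
        ≤ ‖Z‖ ^ 5 * Real.exp ‖Z‖ := bch_tail_bound Z
      _ ≤ (15 * s) ^ 5 * 3 ^ 30 := mul_le_mul h1 h2' (Real.exp_pos _).le
          (pow_nonneg (by linarith) 5)
  have hEY : ‖NormedSpace.exp Y‖ ≤ 3 :=
    (bch_norm_exp_le Y).trans ((Real.exp_le_exp.mpr hY1).trans e1le3)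
  have hSXn : ‖SX‖ ≤ 3 := by
    rw [hdSX, bch_sum5 X]
    have n1 : ‖(1 : Matrix (Fin n) (Fin n) ℂ)‖ ≤ 1 := le_of_eq norm_one
    have b2 := bch_nsmul (show ‖(2:ℂ)⁻¹‖ = ((2:ℝ))⁻¹ by simp) (bch_nmul hX1 hX1 zero_le_one)
    have b3 := bch_nsmul (show ‖(6:ℂ)⁻¹‖ = ((6:ℝ))⁻¹ by simp)
      (bch_nmul (bch_nmul hX1 hX1 zero_le_one) hX1 (by norm_num))
    have b4 := bch_nsmul (show ‖(24:ℂ)⁻¹‖ = ((24:ℝ))⁻¹ by simp)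
      (bch_nmul (bch_nmul (bch_nmul hX1 hX1 zero_le_one) hX1 (by norm_num)) hX1 (by norm_num))
    have e := bch_nadd (bch_nadd (bch_nadd (bch_nadd n1 hX1) b2) b3) b4
    linarith [e]
  have hdec : NormedSpace.exp X * NormedSpace.exp Y - NormedSpace.exp Z
      = ((NormedSpace.exp X - SX) * NormedSpace.exp Y
          + SX * (NormedSpace.exp Y - SY) + (SX * SY - SZ))
        - (NormedSpace.exp Z - SZ) := by noncomm_ring
  have tA : ‖(NormedSpace.exp X - SX) * NormedSpace.exp Y‖ ≤ 3 * s ^ 5 * 3 :=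
    bch_nmul hRx hEY (by linarith)
  have tB : ‖SX * (NormedSpace.exp Y - SY)‖ ≤ 3 * (3 * s ^ 5) :=
    bch_nmul hSXn hRy (by norm_num)
  calc ‖NormedSpace.exp X * NormedSpace.exp Y - NormedSpace.exp Z‖
      = ‖((NormedSpace.exp X - SX) * NormedSpace.exp Y
          + SX * (NormedSpace.exp Y - SY) + (SX * SY - SZ))
        - (NormedSpace.exp Z - SZ)‖ := by rw [hdec]
    _ ≤ (3 * s ^ 5 * 3 + 3 * (3 * s ^ 5) + 1300 * s ^ 5) + (15 * s) ^ 5 * 3 ^ 30 :=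
        bch_nsub (bch_nadd (bch_nadd tA tB) tC) hRz
    _ ≤ 10 ^ 21 * s ^ 5 := by nlinarith [s50]
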